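/- arXiv:2505.03953 — 3 statements merged into one kernel-verified Lean document; each statement's English description precedes it below -/
import Mathlib

section
/- Let X ⊂ ℝ^m be compact with nonempty interior, f : C × X → ℝ continuous, and g : X → ℝ continuous and convex, where g(x) = E[f(c,x)]. If for every c ∈ C the function f(c,·) is strictly coordinate-wise monotonic (for each coordinate i and each fixing of the other coordinates, x_i ↦ f(c, x) is strictly monotone), and g is coordinate-wise non-monotonic in the sense that its minimizer lies in the interior of X, then the minimizer of f(c,·) over X lies on the boundary ∂X for every c ∈ C, while the minimizer of g lies in the interior; consequently min_x g(x) < inf_{ĉ∈C} g(xD(ĉ)) where xD(ĉ) minimizes f(ĉ,·). (V* < V_DFL.) -/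
/-- On a compact `X ⊆ ℝ^m` with nonempty interior, if every scenario
objective `f c` is continuous and strictly coordinate-wise monotonic, and the (convex,
continuous) expected objective `g` has its (unique) minimizer `xstar` in the interior of
`X`, then every minimizer of `f c` over `X` lies on the frontier of `X`, while the
minimizer of `g` is interior; consequently V* = g xstar < V_DFL = inf over predicted
scenarios of the deterministic-proxy value. -/
theorem boundary_vs_interior_vstar_lt_vdfl
    {m : ℕ} (hm : 0 < m) {C : Type*} [Nonempty C]
    (X : Set (Fin m → ℝ)) (hX : IsCompact X) (hint : (interior X).Nonempty)
    (f : C → (Fin m → ℝ) → ℝ) (hfc : ∀ c : C, Continuous (f c))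
    (g : (Fin m → ℝ) → ℝ) (hgc : Continuous g) (hgconv : ConvexOn ℝ X g)
    (hmono : ∀ (c : C) (x : Fin m → ℝ) (i : Fin m),
      StrictMono (fun t : ℝ => f c (Function.update x i t)) ∨
      StrictAnti (fun t : ℝ => f c (Function.update x i t)))
    (xstar : Fin m → ℝ) (hstar_int : xstar ∈ interior X)
    (hstar_min : ∀ x ∈ X, g xstar ≤ g x)
    (hstar_uniq : ∀ x ∈ X, x ≠ xstar → g xstar < g x)
    (xD : C → (Fin m → ℝ)) (hxD : ∀ c : C, xD c ∈ X ∧ ∀ x ∈ X, f c (xD c) ≤ f c x) :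
    (∀ (c : C), ∀ y ∈ X, (∀ x ∈ X, f c y ≤ f c x) → y ∈ frontier X) ∧
      g xstar < sInf {v : ℝ | ∃ chat : C, v = g (xD chat)} := by
  have part1 : ∀ (c : C), ∀ y ∈ X, (∀ x ∈ X, f c y ≤ f c x) → y ∈ frontier X := by
    intro c y hy hmin
    by_contra hnot
    have hyint : y ∈ interior X := by
      have hcl : y ∈ closure X := subset_closure hy
      rw [frontier, Set.mem_diff] at hnot
      push_neg at hnot
      exact hnot hcl
    obtain ⟨ε, hε, hball⟩ := Metric.mem_nhds_iff.mp (mem_interior_iff_mem_nhds.mp hyint)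
    set i : Fin m := ⟨0, hm⟩
    have hdist : ∀ t : ℝ, dist t (y i) = ε / 2 →
        Function.update y i t ∈ X := by
      intro t ht
      apply hball
      rw [Metric.mem_ball, dist_pi_lt_iff hε]
      intro b
      by_cases hb : b = i
      · subst hb
        simpa [Function.update_self, ht] using by linarith
      · simpa [Function.update_of_ne hb] using hε
    rcases hmono c y i with hsm | hsa
    · have hx' : Function.update y i (y i - ε / 2) ∈ X := by
        apply hdist
        rw [Real.dist_eq, show y i - ε / 2 - y i = -(ε / 2) by ring, abs_neg,
          abs_of_pos (by linarith)]
      have hlt : f c (Function.update y i (y i - ε / 2)) < f c y := by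
        have := hsm (show y i - ε / 2 < y i by linarith)
        simpa [Function.update_eq_self] using this
      exact absurd (hmin _ hx') (not_le.mpr hlt)
    · have hx' : Function.update y i (y i + ε / 2) ∈ X := by
        apply hdist
        rw [Real.dist_eq, show y i + ε / 2 - y i = ε / 2 by ring,
          abs_of_pos (by linarith)]
      have hlt : f c (Function.update y i (y i + ε / 2)) < f c y := by
        have := hsa (show y i < y i + ε / 2 by linarith)
        simpa [Function.update_eq_self] using this
      exact absurd (hmin _ hx') (not_le.mpr hlt)
  refine ⟨part1, ?_⟩
  have hXclosed : IsClosed X := hX.isClosed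
  have hfrsub : frontier X ⊆ X := by
    rw [hXclosed.frontier_eq]; exact Set.diff_subset
  have hfrc : IsCompact (frontier X) := hX.of_isClosed_subset isClosed_frontier hfrsub
  obtain ⟨c0⟩ := ‹Nonempty C›
  have hxD0 : xD c0 ∈ frontier X := part1 c0 (xD c0) (hxD c0).1 (hxD c0).2
  obtain ⟨z, hz, hzmin⟩ := hfrc.exists_isMinOn ⟨xD c0, hxD0⟩ hgc.continuousOn
  have hzX : z ∈ X := hfrsub hz
  have hzne : z ≠ xstar := by
    intro h
    rw [h, hXclosed.frontier_eq] at hz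
    exact hz.2 hstar_int
  have hlt : g xstar < g z := hstar_uniq z hzX hzne
  refine lt_of_lt_of_le hlt (le_csInf ⟨g (xD c0), c0, rfl⟩ ?_)
  rintro v ⟨c, rfl⟩
  exact hzmin (part1 c (xD c) (hxD c).1 (hxD c).2)
end

section
/- Let c̄ ∈ C, let P : ℝ^m → ℝ^k (k < m) be a linear projection, and suppose the projected feasible set PX, the projected objectives (c,u) ↦ f(c, x) restricted through P, and u ↦ g on PX satisfy the hypotheses of the boundary-vs-interior theorem (compact projected set with nonempty interior, f strictly coordinate-wise monotone in the projected variables for all c, g convex with interior minimizer in the projected space). Then V* < V_DFL for the original problem. -/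
/-- A minimizer of a strictly coordinate-wise monotone function cannot lie in the
interior of the feasible set. -/
lemma aux_min_not_interior {k : ℕ} (hk0 : 0 < k) (F : (Fin k → ℝ) → ℝ)
    (hmono : ∀ (u : Fin k → ℝ) (i : Fin k),
      StrictMono (fun t : ℝ => F (Function.update u i t)) ∨
      StrictAnti (fun t : ℝ => F (Function.update u i t)))
    (K : Set (Fin k → ℝ)) (u : Fin k → ℝ) (hmin : ∀ v ∈ K, F u ≤ F v) :
    u ∉ interior K := by
  intro huint
  obtain ⟨ε, hε, hball⟩ := Metric.isOpen_iff.mp isOpen_interior u huint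
  set i : Fin k := ⟨0, hk0⟩
  have key : ∀ t : ℝ, |t - u i| = ε / 2 → Function.update u i t ∈ K := by
    intro t ht
    apply interior_subset
    apply hball
    have : dist (Function.update u i t) u ≤ ε / 2 := by
      rw [dist_pi_le_iff (by positivity)]
      intro j
      by_cases hj : j = i
      · subst hj; simp [Real.dist_eq, ht]
      · simp [Function.update_of_ne hj]; positivity
    calc dist (Function.update u i t) u ≤ ε / 2 := this
      _ < ε := by linarith
  have hself : Function.update u i (u i) = u := Function.update_eq_self i u
  rcases hmono u i with h | h
  · have hlt : F (Function.update u i (u i - ε / 2)) < F u := by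
      have := h (show u i - ε / 2 < u i by linarith)
      simpa [hself] using this
    have hmem : Function.update u i (u i - ε / 2) ∈ K := key _ (by
      rw [abs_of_nonpos (by linarith)]; ring)
    exact absurd (hmin _ hmem) (not_le.mpr hlt)
  · have hlt : F (Function.update u i (u i + ε / 2)) < F u := by
      have := h (show u i < u i + ε / 2 by linarith)
      simpa [hself] using this
    have hmem : Function.update u i (u i + ε / 2) ∈ K := key _ (by
      rw [abs_of_nonneg (by linarith)]; ring)
    exact absurd (hmin _ hmem) (not_le.mpr hlt)

/-- Projection corollary. Suppose on `X ⊆ ℝ^m` the objectives factor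
through a linear projection `P : ℝ^m → ℝ^k` (`0 < k < m`): `f c x = F c (P x)` and
`g x = G (P x)` on `X`, where the projected set `P '' X` is compact with nonempty
interior, each `F c` is continuous and strictly coordinate-wise monotonic, `G` is convex
and continuous on `P '' X`, and `G` has its unique minimizer `P xstar` in the interior of
`P '' X`. Then the deterministic proxy is strictly suboptimal: V* = g xstar < V_DFL. -/
theorem projected_boundary_vs_interior_vstar_lt_vdfl
    {m k : ℕ} (hk0 : 0 < k) (hkm : k < m) {C : Type*} [Nonempty C]
    (P : (Fin m → ℝ) →ₗ[ℝ] (Fin k → ℝ))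
    (X : Set (Fin m → ℝ))
    (f : C → (Fin m → ℝ) → ℝ) (g : (Fin m → ℝ) → ℝ)
    (F : C → (Fin k → ℝ) → ℝ) (G : (Fin k → ℝ) → ℝ)
    (hF : ∀ (c : C), ∀ x ∈ X, F c (P x) = f c x)
    (hG : ∀ x ∈ X, G (P x) = g x)
    (hPX : IsCompact (P '' X)) (hint : (interior (P '' X)).Nonempty)
    (hFc : ∀ c : C, Continuous (F c)) (hGc : Continuous G)
    (hGconv : ConvexOn ℝ (P '' X) G)
    (hmono : ∀ (c : C) (u : Fin k → ℝ) (i : Fin k),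
      StrictMono (fun t : ℝ => F c (Function.update u i t)) ∨
      StrictAnti (fun t : ℝ => F c (Function.update u i t)))
    (xstar : Fin m → ℝ) (hxstarX : xstar ∈ X)
    (hstar_int : P xstar ∈ interior (P '' X))
    (hstar_min : ∀ u ∈ P '' X, G (P xstar) ≤ G u)
    (hstar_uniq : ∀ u ∈ P '' X, u ≠ P xstar → G (P xstar) < G u)
    (xD : C → (Fin m → ℝ)) (hxD : ∀ c : C, xD c ∈ X ∧ ∀ x ∈ X, f c (xD c) ≤ f c x) :
    g xstar < sInf {v : ℝ | ∃ chat : C, v = g (xD chat)} := by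
  -- boundary set
  set B : Set (Fin k → ℝ) := (P '' X) \ interior (P '' X) with hB
  -- each P (xD c) lies in B
  have hxDB : ∀ c : C, P (xD c) ∈ B := by
    intro c
    obtain ⟨hcX, hcmin⟩ := hxD c
    have hmemPX : P (xD c) ∈ P '' X := ⟨xD c, hcX, rfl⟩
    have hminF : ∀ v ∈ P '' X, F c (P (xD c)) ≤ F c v := by
      rintro v ⟨x, hxX, rfl⟩
      rw [hF c _ hcX, hF c _ hxX]
      exact hcmin x hxX
    have := aux_min_not_interior hk0 (F c) (hmono c) (P '' X) (P (xD c)) hminF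
    exact ⟨hmemPX, this⟩
  -- B is compact and nonempty
  have hBcomp : IsCompact B := hPX.diff isOpen_interior
  have hBne : B.Nonempty := ⟨P (xD (Classical.arbitrary C)), hxDB _⟩
  -- minimum of G on B
  obtain ⟨u0, hu0B, hu0min⟩ := hBcomp.exists_isMinOn hBne (hGc.continuousOn)
  have hgap : G (P xstar) < G u0 :=
    hstar_uniq u0 hu0B.1 (fun h => hu0B.2 (h ▸ hstar_int))
  -- conclude
  have hgstar : g xstar = G (P xstar) := (hG xstar hxstarX).symm
  rw [hgstar]
  have hSne : {v : ℝ | ∃ chat : C, v = g (xD chat)}.Nonempty :=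
    ⟨g (xD (Classical.arbitrary C)), _, rfl⟩
  have hbound : ∀ v ∈ {v : ℝ | ∃ chat : C, v = g (xD chat)}, G u0 ≤ v := by
    rintro v ⟨c, rfl⟩
    rw [← hG _ (hxD c).1]
    exact hu0min (hxDB c)
  exact lt_of_lt_of_le hgap (le_csInf hSne hbound)
end

section
/- Let X be a finite decision set, C a scenario set, and suppose x* ∈ X is NOT scenario-wise dominated, i.e., there exists c₀ ∈ C such that f(c₀, x*) ≤ f(c₀, x) for all x ∈ X. Then x* is in the image of some minimizer-selection xD : C → X (one can choose xD(c₀) = x*), and hence if additionally x* minimizes g, then V_DFL = V*: absence of scenario-wise dominance of the true optimum implies the deterministic proxy can be optimal. -/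
/-- If `xstar` is NOT scenario-wise dominated, i.e. there is a scenario `c₀`
where `xstar` minimizes `f c₀`, then (on a finite decision set) there is a
minimizer-selection `xD` with `xD c₀ = xstar`; hence if moreover `xstar` minimizes the
expected objective `g`, the deterministic proxy attains the true optimum:
`⨅ chat, g (xD chat) = ⨅ x, g x` (V_DFL = V*). -/
theorem not_dominated_proxy_optimal {X C : Type*} [Fintype X] [Nonempty X]
    (f : C → X → ℝ) (g : X → ℝ)
    (xstar : X) (c₀ : C) (hc₀ : ∀ x : X, f c₀ xstar ≤ f c₀ x) :
    ∃ xD : C → X,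
      (∀ (c : C) (x : X), f c (xD c) ≤ f c x) ∧
      xD c₀ = xstar ∧
      ((∀ x : X, g xstar ≤ g x) → (⨅ chat : C, g (xD chat)) = ⨅ x : X, g x) := by
  classical
  have hmin : ∀ c : C, ∃ x : X, ∀ y : X, f c x ≤ f c y := by
    intro c
    obtain ⟨x, -, hx⟩ := Finset.exists_min_image Finset.univ (f c) ⟨Classical.arbitrary X, Finset.mem_univ _⟩
    exact ⟨x, fun y => hx y (Finset.mem_univ y)⟩
  set xD : C → X := fun c =>
    if h : ∀ y : X, f c xstar ≤ f c y then xstar else Classical.choose (hmin c) with hxD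
  have hsel : ∀ (c : C) (x : X), f c (xD c) ≤ f c x := by
    intro c x
    by_cases h : ∀ y : X, f c xstar ≤ f c y
    · simp only [hxD, dif_pos h]; exact h x
    · simp only [hxD, dif_neg h]; exact Classical.choose_spec (hmin c) x
  have hc0 : xD c₀ = xstar := by simp only [hxD, dif_pos hc₀]
  refine ⟨xD, hsel, hc0, fun hg => ?_⟩
  have hbdd : BddBelow (Set.range fun chat => g (xD chat)) := by
    refine ⟨g xstar, ?_⟩
    rintro _ ⟨c, rfl⟩
    exact hg _
  have hgeq : (⨅ x : X, g x) = g xstar :=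
    le_antisymm (ciInf_le (Finite.bddBelow_range g) xstar) (le_ciInf hg)
  apply le_antisymm
  · calc (⨅ chat : C, g (xD chat)) ≤ g (xD c₀) := ciInf_le hbdd c₀
      _ = g xstar := by rw [hc0]
      _ = ⨅ x : X, g x := hgeq.symm
  · have : Nonempty C := ⟨c₀⟩
    refine le_ciInf fun c => ?_
    rw [hgeq]; exact hg _
end
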